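/- arXiv:2206.04743 — 6 statements merged into one kernel-verified Lean document; each statement's English description precedes it below -/
import Mathlib

section
/- Let D0 and D1 be discrete probability distributions on the real numbers (probability mass functions supported on a countable subset of ℝ) with finite second moments and means μ0 and μ1 respectively, and let D = (D0 + D1)/2 denote their uniform mixture. If D has positive variance Var(D), then JSD(D0 ‖ D1) ≥ (μ0 − μ1)² / (8 · Var(D)). -/
open Real Set

lemma psi_deriv1 (x : ℝ) (hx : x ∈ Ioo (0:ℝ) 1) :
    HasDerivAt (fun t : ℝ => Real.log (1+t) - Real.log (1-t) - 2*t)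
      (1/(1+x) + 1/(1-x) - 2) x := by
  obtain ⟨h0, h1⟩ := hx
  have h1p : (0:ℝ) < 1 + x := by linarith
  have h1m : (0:ℝ) < 1 - x := by linarith
  have d1 : HasDerivAt (fun t : ℝ => Real.log (1+t)) (1/(1+x)) x := by
    have := (Real.hasDerivAt_log h1p.ne').comp x ((hasDerivAt_id x).const_add 1)
    simpa [Function.comp_def] using this
  have d2 : HasDerivAt (fun t : ℝ => Real.log (1-t)) (-(1/(1-x))) x := by
    have := (Real.hasDerivAt_log h1m.ne').comp x ((hasDerivAt_id x).neg.const_add 1)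
    simpa [div_eq_mul_inv, Function.comp_def] using this
  have := (d1.sub d2).sub ((hasDerivAt_id x).const_mul 2)
  exact this.congr_deriv (by ring)

lemma psi_g_nonneg : ∀ x ∈ Ico (0:ℝ) 1, 0 ≤ Real.log (1+x) - Real.log (1-x) - 2*x := by
  have mono : MonotoneOn (fun t : ℝ => Real.log (1+t) - Real.log (1-t) - 2*t) (Ico (0:ℝ) 1) := by
    apply monotoneOn_of_hasDerivWithinAt_nonneg (convex_Ico 0 1)
      (f' := fun x => 1/(1+x) + 1/(1-x) - 2)
    · intro x hx
      simp only [mem_Ico] at hx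
      have h1p : (0:ℝ) < 1 + x := by linarith [hx.1]
      have h1m : (0:ℝ) < 1 - x := by linarith [hx.2]
      exact (((Real.continuousAt_log h1p.ne').comp (by fun_prop)).sub
        ((Real.continuousAt_log h1m.ne').comp (by fun_prop))).sub (by fun_prop)
        |>.continuousWithinAt
    · rw [interior_Ico]
      intro x hx
      exact (psi_deriv1 x hx).hasDerivWithinAt
    · rw [interior_Ico]
      rintro x ⟨h0, h1⟩
      have h1p : (0:ℝ) < 1 + x := by linarith
      have h1m : (0:ℝ) < 1 - x := by linarith
      rw [div_add_div _ _ h1p.ne' h1m.ne', sub_nonneg, le_div_iff₀ (by positivity)]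
      nlinarith
  intro x hx
  have := mono (left_mem_Ico.2 one_pos) hx hx.1
  simpa using this

lemma psi_deriv2 (x : ℝ) (hx : x ∈ Ioo (0:ℝ) 1) :
    HasDerivAt (fun t : ℝ => (1+t)*Real.log (1+t) + (1-t)*Real.log (1-t) - t^2)
      (Real.log (1+x) - Real.log (1-x) - 2*x) x := by
  obtain ⟨h0, h1⟩ := hx
  have h1p : (0:ℝ) < 1 + x := by linarith
  have h1m : (0:ℝ) < 1 - x := by linarith
  have dl1 : HasDerivAt (fun t : ℝ => Real.log (1+t)) (1/(1+x)) x := by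
    have := (Real.hasDerivAt_log h1p.ne').comp x ((hasDerivAt_id x).const_add 1)
    simpa [Function.comp_def] using this
  have dl2 : HasDerivAt (fun t : ℝ => Real.log (1-t)) (-(1/(1-x))) x := by
    have := (Real.hasDerivAt_log h1m.ne').comp x ((hasDerivAt_id x).neg.const_add 1)
    simpa [div_eq_mul_inv, Function.comp_def] using this
  have d1 : HasDerivAt (fun t : ℝ => (1+t)*Real.log (1+t))
      (1 * Real.log (1+x) + (1+x) * (1/(1+x))) x :=
    ((hasDerivAt_id x).const_add 1).mul dl1
  have d2 : HasDerivAt (fun t : ℝ => (1-t)*Real.log (1-t))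
      ((-1) * Real.log (1-x) + (1-x) * (-(1/(1-x)))) x :=
    (((hasDerivAt_id x).neg.const_add 1)).mul dl2
  have := (d1.add d2).sub (hasDerivAt_pow 2 x)
  exact this.congr_deriv (by field_simp; ring)

lemma psi_nonneg : ∀ x ∈ Icc (0:ℝ) 1,
    x^2 ≤ (1+x)*Real.log (1+x) + (1-x)*Real.log (1-x) := by
  have key : ∀ x ∈ Ico (0:ℝ) 1,
      x^2 ≤ (1+x)*Real.log (1+x) + (1-x)*Real.log (1-x) := by
    have mono : MonotoneOn (fun t : ℝ => (1+t)*Real.log (1+t) + (1-t)*Real.log (1-t) - t^2)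
        (Ico (0:ℝ) 1) := by
      apply monotoneOn_of_hasDerivWithinAt_nonneg (convex_Ico 0 1)
        (f' := fun x => Real.log (1+x) - Real.log (1-x) - 2*x)
      · intro x hx
        simp only [mem_Ico] at hx
        have h1p : (0:ℝ) < 1 + x := by linarith [hx.1]
        have h1m : (0:ℝ) < 1 - x := by linarith [hx.2]
        exact (((by fun_prop : ContinuousAt (fun t:ℝ => 1+t) x).mul
          ((Real.continuousAt_log h1p.ne').comp (by fun_prop))).add
          ((by fun_prop : ContinuousAt (fun t:ℝ => 1-t) x).mul
          ((Real.continuousAt_log h1m.ne').comp (by fun_prop)))).sub (by fun_prop)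
          |>.continuousWithinAt
      · rw [interior_Ico]
        intro x hx
        exact (psi_deriv2 x hx).hasDerivWithinAt
      · rw [interior_Ico]
        intro x hx
        exact psi_g_nonneg x ⟨le_of_lt hx.1, hx.2⟩
    intro x hx
    have := mono (left_mem_Ico.2 one_pos) hx hx.1
    norm_num at this
    linarith
  intro x hx
  rcases eq_or_lt_of_le hx.2 with h1 | h1
  · subst h1
    norm_num
    nlinarith [Real.log_two_gt_d9]
  · exact key x ⟨hx.1, h1⟩

lemma jsd_pointwise_helper (a b : ℝ) (ha : 0 ≤ a) (hb : 0 ≤ b) (hba : b ≤ a) :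
    (a-b)^2/(2*(a+b)) ≤ a * Real.log (a/((a+b)/2)) + b * Real.log (b/((a+b)/2)) := by
  rcases eq_or_lt_of_le (by linarith : (0:ℝ) ≤ a + b) with hc | hc
  · have ha0 : a = 0 := by linarith
    have hb0 : b = 0 := by linarith
    simp [ha0, hb0]
  · set t := (a-b)/(a+b) with hts
    have ht0 : 0 ≤ t := div_nonneg (by linarith) (by linarith)
    have ht1 : t ≤ 1 := by rw [hts, div_le_one hc]; linarith
    have e1 : a / ((a+b)/2) = 1 + t := by rw [hts]; field_simp; ring
    have e2 : b / ((a+b)/2) = 1 - t := by rw [hts]; field_simp; ring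
    have key := psi_nonneg t ⟨ht0, ht1⟩
    rw [e1, e2]
    set L1 := Real.log (1+t)
    set L2 := Real.log (1-t)
    have h1 : (a+b) * (1+t) = 2*a := by rw [hts]; field_simp; ring
    have h2 : (a+b) * (1-t) = 2*b := by rw [hts]; field_simp; ring
    have h3 : (a+b) * t = a - b := by rw [hts]; field_simp
    rw [div_le_iff₀ (by positivity)]
    calc (a-b)^2 = ((a+b)*t)^2 := by rw [h3]
      _ = (a+b)^2 * t^2 := by ring
      _ ≤ (a+b)^2 * ((1+t)*L1 + (1-t)*L2) :=
          mul_le_mul_of_nonneg_left key (sq_nonneg _)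
      _ = (a*L1 + b*L2) * (2*(a+b)) := by
          linear_combination ((a+b)*L1)*h1 + ((a+b)*L2)*h2

lemma jsd_pointwise (a b : ℝ) (ha : 0 ≤ a) (hb : 0 ≤ b) :
    (a-b)^2/(2*(a+b)) ≤ a * Real.log (a/((a+b)/2)) + b * Real.log (b/((a+b)/2)) := by
  rcases le_total b a with h | h
  · exact jsd_pointwise_helper a b ha hb h
  · have := jsd_pointwise_helper b a hb ha h
    rw [show b+a = a+b from add_comm b a, show (b-a)^2 = (a-b)^2 by ring] at this
    linarith

lemma jsd_term_abs_bound (a b : ℝ) (ha : 0 ≤ a) (hb : 0 ≤ b) :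
    |a * Real.log (a / ((a+b)/2))| ≤ a * Real.log 2 + (a+b)/2 := by
  rcases eq_or_lt_of_le ha with ha0 | ha0
  · simp [← ha0]
    positivity
  · have hm : 0 < (a+b)/2 := by linarith
    have hr : 0 < a / ((a+b)/2) := by positivity
    have hup : a * Real.log (a / ((a+b)/2)) ≤ a * Real.log 2 := by
      apply mul_le_mul_of_nonneg_left _ ha
      apply Real.log_le_log hr
      rw [div_le_iff₀ hm]
      linarith
    have hlo : a - (a+b)/2 ≤ a * Real.log (a / ((a+b)/2)) := by
      have := Real.one_sub_inv_le_log_of_pos hr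
      have h2 : (a / ((a+b)/2))⁻¹ = ((a+b)/2) / a := by
        rw [inv_div]
      rw [h2] at this
      have := mul_le_mul_of_nonneg_left this (le_of_lt ha0)
      calc a - (a+b)/2 = a * (1 - ((a+b)/2)/a) := by field_simp
        _ ≤ a * Real.log (a / ((a+b)/2)) := this
        
    rw [abs_le]
    constructor
    · nlinarith [mul_nonneg ha (Real.log_pos (by norm_num : (1:ℝ) < 2)).le]
    · linarith [mul_nonneg ha (Real.log_pos (by norm_num : (1:ℝ) < 2)).le]

lemma jsd_amgm (p q x μ t : ℝ) (hp : 0 ≤ p) (hq : 0 ≤ q) (ht : 0 < t) :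
    |(p - q) * (x - μ)| ≤ (t * ((p-q)^2/(2*(p+q))) + 2*(p+q)*(x-μ)^2/t)/2 := by
  rcases eq_or_lt_of_le (by linarith : (0:ℝ) ≤ p + q) with hc | hc
  · have hp0 : p = 0 := by linarith
    have hq0 : q = 0 := by linarith
    simp [hp0, hq0]
  · have key : 4*(p+q)*t*(|p - q| * |x - μ|) ≤ t^2*(p-q)^2 + 4*(p+q)^2*(x-μ)^2 := by
      nlinarith [sq_nonneg (t * |p - q| - 2*(p+q) * |x - μ|), sq_abs (p-q), sq_abs (x-μ),
        mul_nonneg (abs_nonneg (p-q)) (abs_nonneg (x-μ))]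
    rw [abs_mul]
    have e : (t * ((p-q)^2/(2*(p+q))) + 2*(p+q)*(x-μ)^2/t)/2
        = (t^2*(p-q)^2 + 4*(p+q)^2*(x-μ)^2)/(4*(p+q)*t) := by
      field_simp
      ring
    rw [e, le_div_iff₀ (by positivity)]
    nlinarith [key]


/-- Lemma (JSD lower bound): for discrete distributions `D0`, `D1` on `ℝ` with finite
second moments, means `μ0`, `μ1`, and uniform mixture `D = (D0 + D1)/2` with positive
variance, `JSD(D0 ‖ D1) ≥ (μ0 − μ1)² / (8 · Var(D))`. -/
theorem jsd_ge_mean_gap_sq_div_variance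
    (D0 D1 : ℝ → ℝ)
    (h0nn : ∀ x, 0 ≤ D0 x) (h1nn : ∀ x, 0 ≤ D1 x)
    (h0sum : HasSum D0 1) (h1sum : HasSum D1 1)
    (h0mom : Summable (fun x => x ^ 2 * D0 x))
    (h1mom : Summable (fun x => x ^ 2 * D1 x))
    (μ0 μ1 μ V JSD : ℝ)
    (hμ0 : μ0 = ∑' x : ℝ, x * D0 x)
    (hμ1 : μ1 = ∑' x : ℝ, x * D1 x)
    (hμ : μ = ∑' x : ℝ, x * ((D0 x + D1 x) / 2))
    (hV : V = ∑' x : ℝ, (x - μ) ^ 2 * ((D0 x + D1 x) / 2))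
    (hJSD : JSD = (1/2) * ∑' x : ℝ, D0 x * Real.log (D0 x / ((D0 x + D1 x) / 2))
                + (1/2) * ∑' x : ℝ, D1 x * Real.log (D1 x / ((D0 x + D1 x) / 2)))
    (hVpos : 0 < V) :
    JSD ≥ (μ0 - μ1) ^ 2 / (8 * V) := by
  have hsp : Summable D0 := h0sum.summable
  have hsq : Summable D1 := h1sum.summable
  -- summability of first moments
  have hxp : Summable (fun x : ℝ => x * D0 x) := by
    rw [← summable_abs_iff]
    apply Summable.of_nonneg_of_le (fun x => abs_nonneg _)
      (fun x => ?_) ((h0mom.add hsp).div_const 2)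
    rw [abs_mul, abs_of_nonneg (h0nn x)]
    nlinarith [sq_nonneg (|x| - 1), sq_abs x, h0nn x, abs_nonneg x,
      mul_nonneg (mul_nonneg (abs_nonneg x) (abs_nonneg x)) (h0nn x)]
  have hxq : Summable (fun x : ℝ => x * D1 x) := by
    rw [← summable_abs_iff]
    apply Summable.of_nonneg_of_le (fun x => abs_nonneg _)
      (fun x => ?_) ((h1mom.add hsq).div_const 2)
    rw [abs_mul, abs_of_nonneg (h1nn x)]
    nlinarith [sq_nonneg (|x| - 1), sq_abs x, h1nn x, abs_nonneg x,
      mul_nonneg (mul_nonneg (abs_nonneg x) (abs_nonneg x)) (h1nn x)]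
  -- summability of centered second moment
  have hvar : Summable (fun x : ℝ => (x - μ)^2 * ((D0 x + D1 x)/2)) := by
    have e : (fun x : ℝ => (x - μ)^2 * ((D0 x + D1 x)/2))
        = fun x => ((x^2 * D0 x)/2 + (x^2 * D1 x)/2 - μ * (x * D0 x) - μ * (x * D1 x))
          + ((μ^2/2) * D0 x + (μ^2/2) * D1 x) := by
      funext x; ring
    rw [e]
    exact ((((h0mom.div_const 2).add (h1mom.div_const 2)).sub (hxp.mul_left μ)).sub
      (hxq.mul_left μ)).add ((hsp.mul_left _).add (hsq.mul_left _))
  have hw : Summable (fun x : ℝ => 2*(D0 x + D1 x)*(x - μ)^2) := by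
    have e : (fun x : ℝ => 2*(D0 x + D1 x)*(x - μ)^2)
        = fun x => 4 * ((x - μ)^2 * ((D0 x + D1 x)/2)) := by funext x; ring
    rw [e]; exact hvar.mul_left 4
  have hw_sum : ∑' x : ℝ, 2*(D0 x + D1 x)*(x - μ)^2 = 4 * V := by
    have e : (fun x : ℝ => 2*(D0 x + D1 x)*(x - μ)^2)
        = fun x => 4 * ((x - μ)^2 * ((D0 x + D1 x)/2)) := by funext x; ring
    rw [e, tsum_mul_left, ← hV]
  -- the signed sum A
  have hA_hs : HasSum (fun x : ℝ => (D0 x - D1 x) * (x - μ)) (μ0 - μ1) := by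
    have h' := (hxp.hasSum.sub hxq.hasSum).sub ((h0sum.sub h1sum).mul_left μ)
    have e : (fun x : ℝ => (D0 x - D1 x) * (x - μ))
        = fun x => (x * D0 x - x * D1 x) - μ * (D0 x - D1 x) := by funext x; ring
    rw [e, hμ0, hμ1]
    simpa using h'
  have hA : Summable (fun x : ℝ => (D0 x - D1 x) * (x - μ)) := hA_hs.summable
  have hA_sum : ∑' x : ℝ, (D0 x - D1 x) * (x - μ) = μ0 - μ1 := hA_hs.tsum_eq
  -- the per-point quadratic s
  have hs_nonneg : ∀ x : ℝ, 0 ≤ (D0 x - D1 x)^2 / (2*(D0 x + D1 x)) := by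
    intro x
    apply div_nonneg (sq_nonneg _)
    linarith [h0nn x, h1nn x]
  have hs_le : ∀ x : ℝ, (D0 x - D1 x)^2 / (2*(D0 x + D1 x)) ≤ (D0 x + D1 x)/2 := by
    intro x
    rcases eq_or_lt_of_le (add_nonneg (h0nn x) (h1nn x)) with h | h
    · rw [← h]; norm_num
    · rw [div_le_iff₀ (by linarith)]
      nlinarith [mul_nonneg (h0nn x) (h1nn x)]
  have hs : Summable (fun x : ℝ => (D0 x - D1 x)^2 / (2*(D0 x + D1 x))) :=
    Summable.of_nonneg_of_le hs_nonneg hs_le ((hsp.add hsq).div_const 2)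
  -- summability of the log terms
  have hf0 : Summable (fun x : ℝ => D0 x * Real.log (D0 x / ((D0 x + D1 x)/2))) := by
    rw [← summable_abs_iff]
    exact Summable.of_nonneg_of_le (fun x => abs_nonneg _)
      (fun x => jsd_term_abs_bound (D0 x) (D1 x) (h0nn x) (h1nn x))
      ((hsp.mul_right _).add ((hsp.add hsq).div_const 2))
  have hf1 : Summable (fun x : ℝ => D1 x * Real.log (D1 x / ((D0 x + D1 x)/2))) := by
    rw [← summable_abs_iff]
    have hb1 : ∀ x : ℝ, |D1 x * Real.log (D1 x / ((D0 x + D1 x)/2))|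
        ≤ D1 x * Real.log 2 + (D0 x + D1 x)/2 := by
      intro x
      have := jsd_term_abs_bound (D1 x) (D0 x) (h1nn x) (h0nn x)
      rw [add_comm (D1 x) (D0 x)] at this
      exact this
    exact Summable.of_nonneg_of_le (fun x => abs_nonneg _) hb1
      ((hsq.mul_right _).add ((hsp.add hsq).div_const 2))
  -- S ≤ 2 JSD
  set S := ∑' x : ℝ, (D0 x - D1 x)^2 / (2*(D0 x + D1 x)) with hSdef
  have hS0 : 0 ≤ S := tsum_nonneg hs_nonneg
  have hSle : S ≤ 2 * JSD := by
    have hpt : ∀ x : ℝ, (D0 x - D1 x)^2 / (2*(D0 x + D1 x))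
        ≤ D0 x * Real.log (D0 x / ((D0 x + D1 x)/2))
          + D1 x * Real.log (D1 x / ((D0 x + D1 x)/2)) :=
      fun x => jsd_pointwise (D0 x) (D1 x) (h0nn x) (h1nn x)
    have h1 := Summable.tsum_le_tsum hpt hs (hf0.add hf1)
    rw [Summable.tsum_add hf0 hf1] at h1
    rw [hJSD]
    linarith
  -- main quadratic bound
  have hmain : (μ0 - μ1)^2 ≤ 4 * S * V := by
    rcases eq_or_lt_of_le hS0 with hS | hS
    · -- S = 0
      have hzero : ∀ x : ℝ, (D0 x - D1 x)^2 / (2*(D0 x + D1 x)) = 0 := by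
        intro x
        have hle := Summable.le_tsum hs x (fun y _ => hs_nonneg y)
        rw [← hSdef] at hle
        linarith [hs_nonneg x]
      have hAzero : ∀ x : ℝ, (D0 x - D1 x) * (x - μ) = 0 := by
        intro x
        rcases eq_or_lt_of_le (add_nonneg (h0nn x) (h1nn x)) with h | h
        · have : D0 x - D1 x = 0 := by
            have h0 : D0 x = 0 := by linarith [h0nn x, h1nn x]
            have h1 : D1 x = 0 := by linarith [h0nn x, h1nn x]
            rw [h0, h1]; ring
          rw [this]; ring
        · have hz := hzero x
          rw [div_eq_zero_iff] at hz
          rcases hz with hz | hz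
          · rw [pow_eq_zero_iff (by norm_num)] at hz
            rw [hz]; ring
          · exfalso; linarith
      have : μ0 - μ1 = 0 := by
        rw [← hA_sum, show (fun x : ℝ => (D0 x - D1 x) * (x - μ)) = fun _ => (0:ℝ) from
          funext hAzero, tsum_zero]
      rw [this, ← hS]
      norm_num
    · -- S > 0
      set u := Real.sqrt (4 * V) with hu
      set v := Real.sqrt S with hv
      have hu2 : u^2 = 4 * V := Real.sq_sqrt (by positivity)
      have hv2 : v^2 = S := Real.sq_sqrt hS.le
      have hupos : 0 < u := Real.sqrt_pos.2 (by positivity)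
      have hvpos : 0 < v := Real.sqrt_pos.2 hS
      set t := u / v with htdef
      have ht : 0 < t := by positivity
      have hpt : ∀ x : ℝ, |(D0 x - D1 x) * (x - μ)|
          ≤ (t * ((D0 x - D1 x)^2/(2*(D0 x + D1 x))) + 2*(D0 x + D1 x)*(x-μ)^2/t)/2 :=
        fun x => jsd_amgm (D0 x) (D1 x) x μ t (h0nn x) (h1nn x) ht
      have hRHSsum : Summable (fun x : ℝ =>
          (t * ((D0 x - D1 x)^2/(2*(D0 x + D1 x))) + 2*(D0 x + D1 x)*(x-μ)^2/t)/2) :=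
        ((hs.mul_left t).add (hw.div_const t)).div_const 2
      have h1 : |∑' x : ℝ, (D0 x - D1 x) * (x - μ)|
          ≤ ∑' x : ℝ, |(D0 x - D1 x) * (x - μ)| := by
        have hn : Summable fun x : ℝ => ‖(D0 x - D1 x) * (x - μ)‖ := by
          simp only [Real.norm_eq_abs]; exact hA.abs
        have := norm_tsum_le_tsum_norm hn
        simp only [Real.norm_eq_abs] at this
        exact this
      have h2 := Summable.tsum_le_tsum hpt hA.abs hRHSsum
      have h3 : ∑' x : ℝ, (t * ((D0 x - D1 x)^2/(2*(D0 x + D1 x)))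
          + 2*(D0 x + D1 x)*(x-μ)^2/t)/2 = (t * S + 4 * V / t)/2 := by
        have e : (fun x : ℝ => (t * ((D0 x - D1 x)^2/(2*(D0 x + D1 x)))
            + 2*(D0 x + D1 x)*(x-μ)^2/t)/2)
            = fun x => (t/2) * ((D0 x - D1 x)^2/(2*(D0 x + D1 x)))
              + (1/(2*t)) * (2*(D0 x + D1 x)*(x-μ)^2) := by
          funext x
          generalize (D0 x - D1 x) ^ 2 / (2 * (D0 x + D1 x)) = X
          field_simp
        rw [e, Summable.tsum_add (hs.mul_left _) (hw.mul_left _), tsum_mul_left, tsum_mul_left,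
          hw_sum, ← hSdef]
        field_simp
      have h4 : (t * S + 4 * V / t)/2 = u * v := by
        rw [htdef, ← hu2, ← hv2]
        field_simp
        ring
      have h5 : |μ0 - μ1| ≤ u * v := by
        rw [← hA_sum]
        calc |∑' x : ℝ, (D0 x - D1 x) * (x - μ)|
            ≤ ∑' x : ℝ, |(D0 x - D1 x) * (x - μ)| := h1
          _ ≤ (t * S + 4 * V / t)/2 := by rw [← h3]; exact h2
          _ = u * v := h4
      have h6 : (μ0 - μ1)^2 ≤ (u * v)^2 := by
        rw [← sq_abs]
        exact pow_le_pow_left₀ (abs_nonneg _) h5 2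
      calc (μ0 - μ1)^2 ≤ (u * v)^2 := h6
        _ = u^2 * v^2 := by ring
        _ = 4 * S * V := by rw [hu2, hv2]; ring
  -- conclude
  rw [ge_iff_le, div_le_iff₀ (by positivity : (0:ℝ) < 8 * V)]
  nlinarith [hmain, hSle, hVpos, hS0]
end

section
/- Let D0 and D1 be discrete probability distributions on the real numbers with finite second moments and means μ0 and μ1 respectively, and let D = (D0 + D1)/2 be their uniform mixture. Then (μ1 − μ0)² ≤ Var(D) · ∑_x (D1(x) − D0(x))² / D(x), where the sum ranges over all x in the support of D. -/
/-- Cauchy–Schwarz for tsums. -/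
lemma tsum_cauchy_schwarz (f g : ℝ → ℝ)
    (hf : Summable (fun x => f x ^ 2)) (hg : Summable (fun x => g x ^ 2)) :
    (∑' x, f x * g x) ^ 2 ≤ (∑' x, f x ^ 2) * ∑' x, g x ^ 2 := by
  have habs : Summable (fun x => |f x * g x|) := by
    apply Summable.of_nonneg_of_le (fun x => abs_nonneg _)
      (fun x => ?_) ((hf.add hg).div_const 2)
    rw [abs_mul]
    nlinarith [sq_nonneg (|f x| - |g x|), sq_abs (f x), sq_abs (g x),
      abs_nonneg (f x), abs_nonneg (g x)]
  have hfg : Summable (fun x => f x * g x) := habs.of_abs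
  have hten : Filter.Tendsto (fun s : Finset ℝ => (∑ x ∈ s, f x * g x) ^ 2)
      Filter.atTop (nhds ((∑' x, f x * g x) ^ 2)) :=
    ((continuous_pow 2).continuousAt (x := ∑' x, f x * g x)).tendsto.comp hfg.hasSum
  refine le_of_tendsto hten (Filter.Eventually.of_forall fun s => ?_)
  calc (∑ x ∈ s, f x * g x) ^ 2 ≤ (∑ x ∈ s, f x ^ 2) * ∑ x ∈ s, g x ^ 2 :=
        Finset.sum_mul_sq_le_sq_mul_sq s f g
    _ ≤ (∑' x, f x ^ 2) * ∑' x, g x ^ 2 := by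
        apply mul_le_mul (Summable.sum_le_tsum s (fun x _ => sq_nonneg _) hf)
          (Summable.sum_le_tsum s (fun x _ => sq_nonneg _) hg)
          (Finset.sum_nonneg fun x _ => sq_nonneg _)
          (tsum_nonneg fun x => sq_nonneg _)

/-- For discrete distributions `D0`, `D1` on `ℝ` with finite second moments, means
`μ0`, `μ1`, and uniform mixture `D = (D0 + D1)/2`,
`(μ1 − μ0)² ≤ Var(D) · ∑_x (D1(x) − D0(x))² / D(x)`
(terms outside the support of `D` contribute `0`, since there both `D0` and `D1` vanish). -/
theorem mean_gap_sq_le_variance_mul_chi_sum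
    (D0 D1 : ℝ → ℝ)
    (h0nn : ∀ x, 0 ≤ D0 x) (h1nn : ∀ x, 0 ≤ D1 x)
    (h0sum : HasSum D0 1) (h1sum : HasSum D1 1)
    (h0mom : Summable (fun x => x ^ 2 * D0 x))
    (h1mom : Summable (fun x => x ^ 2 * D1 x))
    (μ0 μ1 μ V : ℝ)
    (hμ0 : μ0 = ∑' x : ℝ, x * D0 x)
    (hμ1 : μ1 = ∑' x : ℝ, x * D1 x)
    (hμ : μ = ∑' x : ℝ, x * ((D0 x + D1 x) / 2))
    (hV : V = ∑' x : ℝ, (x - μ) ^ 2 * ((D0 x + D1 x) / 2)) :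
    (μ1 - μ0) ^ 2 ≤ V * ∑' x : ℝ, (D1 x - D0 x) ^ 2 / ((D0 x + D1 x) / 2) := by
  set Dm : ℝ → ℝ := fun x => (D0 x + D1 x) / 2 with hDm
  have hDmnn : ∀ x, 0 ≤ Dm x := fun x => by
    have := h0nn x; have := h1nn x; simp only [hDm]; linarith
  have hDmsum : Summable Dm := ((h0sum.summable.add h1sum.summable).div_const 2)
  -- summability of first moments
  have hx0 : Summable (fun x => x * D0 x) := by
    apply Summable.of_abs
    apply Summable.of_nonneg_of_le (fun x => abs_nonneg _) (fun x => ?_)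
      (h0mom.add h0sum.summable)
    have h0 := h0nn x
    rw [abs_mul]
    have : |x| ≤ x ^ 2 + 1 := by nlinarith [abs_nonneg x, sq_abs x, sq_nonneg (|x| - 1)]
    calc |x| * |D0 x| = |x| * D0 x := by rw [abs_of_nonneg h0]
      _ ≤ (x ^ 2 + 1) * D0 x := by nlinarith
      _ = x ^ 2 * D0 x + D0 x := by ring
  have hx1 : Summable (fun x => x * D1 x) := by
    apply Summable.of_abs
    apply Summable.of_nonneg_of_le (fun x => abs_nonneg _) (fun x => ?_)
      (h1mom.add h1sum.summable)
    have h1 := h1nn x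
    rw [abs_mul]
    have : |x| ≤ x ^ 2 + 1 := by nlinarith [abs_nonneg x, sq_abs x, sq_nonneg (|x| - 1)]
    calc |x| * |D1 x| = |x| * D1 x := by rw [abs_of_nonneg h1]
      _ ≤ (x ^ 2 + 1) * D1 x := by nlinarith
      _ = x ^ 2 * D1 x + D1 x := by ring
  have hxm : Summable (fun x => x * Dm x) := by
    have : (fun x => x * Dm x) = fun x => (x * D0 x + x * D1 x) / 2 := by
      funext x; simp only [hDm]; ring
    rw [this]; exact (hx0.add hx1).div_const 2
  have hx2m : Summable (fun x => x ^ 2 * Dm x) := by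
    have : (fun x => x ^ 2 * Dm x) = fun x => (x ^ 2 * D0 x + x ^ 2 * D1 x) / 2 := by
      funext x; simp only [hDm]; ring
    rw [this]; exact (h0mom.add h1mom).div_const 2
  -- summability of (x-μ)^2 * Dm
  have hf2 : Summable (fun x => (x - μ) ^ 2 * Dm x) := by
    have : (fun x => (x - μ) ^ 2 * Dm x)
        = fun x => x ^ 2 * Dm x - (2 * μ) * (x * Dm x) + μ ^ 2 * Dm x := by
      funext x; ring
    rw [this]
    exact (hx2m.sub (hxm.mul_left (2 * μ))).add (hDmsum.mul_left (μ ^ 2))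
  -- Dm x = 0 → D0 x = 0 ∧ D1 x = 0
  have hzero : ∀ x, Dm x = 0 → D0 x = 0 ∧ D1 x = 0 := by
    intro x hx
    have h0 := h0nn x; have h1 := h1nn x
    simp only [hDm] at hx
    constructor <;> linarith
  -- summability of (D1-D0)^2 / Dm
  have hg2 : Summable (fun x => (D1 x - D0 x) ^ 2 / Dm x) := by
    apply Summable.of_nonneg_of_le (fun x => div_nonneg (sq_nonneg _) (hDmnn x))
      (fun x => ?_) (hDmsum.mul_left 4)
    rcases eq_or_lt_of_le (hDmnn x) with h | h
    · rcases hzero x h.symm with ⟨e0, e1⟩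
      have := hDmnn x
      simp only [e0, e1, sub_zero, zero_pow, ne_eq, OfNat.ofNat_ne_zero,
        not_false_eq_true, zero_div]
      linarith
    · rw [div_le_iff₀ h]
      have h0 := h0nn x; have h1 := h1nn x
      have : (D1 x - D0 x) ^ 2 ≤ (D0 x + D1 x) ^ 2 := by nlinarith
      simp only [hDm]; nlinarith
  -- define f and g
  set f : ℝ → ℝ := fun x => (x - μ) * Real.sqrt (Dm x) with hfdef
  set g : ℝ → ℝ := fun x => (D1 x - D0 x) / Real.sqrt (Dm x) with hgdef
  have hfsq : ∀ x, f x ^ 2 = (x - μ) ^ 2 * Dm x := by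
    intro x
    simp only [hfdef, mul_pow, Real.sq_sqrt (hDmnn x)]
  have hgsq : ∀ x, g x ^ 2 = (D1 x - D0 x) ^ 2 / Dm x := by
    intro x
    simp only [hgdef, div_pow, Real.sq_sqrt (hDmnn x)]
  have hfg : ∀ x, f x * g x = (x - μ) * (D1 x - D0 x) := by
    intro x
    rcases eq_or_lt_of_le (hDmnn x) with h | h
    · rcases hzero x h.symm with ⟨e0, e1⟩
      simp [hfdef, hgdef, e0, e1]
    · have hs : Real.sqrt (Dm x) ≠ 0 := by positivity
      simp only [hfdef, hgdef]
      field_simp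
  -- key equality: ∑' (x-μ)(D1-D0) = μ1 - μ0
  have hkey : (∑' x, f x * g x) = μ1 - μ0 := by
    have e1 : (fun x => f x * g x)
        = fun x => (x * D1 x - x * D0 x) - μ * (D1 x - D0 x) := by
      funext x; rw [hfg x]; ring
    rw [e1, Summable.tsum_sub (hx1.sub hx0) ((h1sum.summable.sub h0sum.summable).mul_left μ),
      Summable.tsum_sub hx1 hx0, tsum_mul_left,
      Summable.tsum_sub h1sum.summable h0sum.summable,
      h1sum.tsum_eq, h0sum.tsum_eq, hμ0, hμ1]
    ring
  -- apply Cauchy–Schwarz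
  have hf2' : Summable (fun x => f x ^ 2) := by
    simpa only [funext hfsq] using hf2
  have hg2' : Summable (fun x => g x ^ 2) := by
    simpa only [funext hgsq] using hg2
  have hCS := tsum_cauchy_schwarz f g hf2' hg2'
  rw [hkey] at hCS
  have ef : (∑' x, f x ^ 2) = V := by
    rw [hV]; exact tsum_congr hfsq
  have eg : (∑' x, g x ^ 2) = ∑' x : ℝ, (D1 x - D0 x) ^ 2 / ((D0 x + D1 x) / 2) :=
    tsum_congr hgsq
  rwa [ef, eg] at hCS
end

section
/- Let (F_t)_{t=0,…,T} be a filtration on a probability space and let (P_t)_{t=0,…,T} be a supermartingale adapted to it such that 0 ≤ P_t ≤ 1 almost surely for every t and P_0 = 1/2 almost surely. Then ∑_{t=1}^{T} E[(P_t − E[P_t | F_{t−1}])²] ≤ 5/4. -/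
open MeasureTheory

/-- For a supermartingale `(P_t)_{t=0,…,T}` with values in `[0,1]` a.s. and `P_0 = 1/2` a.s.,
`∑_{t=1}^{T} E[(P_t − E[P_t | F_{t−1}])²] ≤ 5/4`. -/
theorem supermartingale_sum_conditional_variances_le
    {Ω : Type*} [m : MeasurableSpace Ω] (μ : Measure Ω) [IsProbabilityMeasure μ]
    (T : ℕ) (ℱ : Filtration ℕ m) (P : ℕ → Ω → ℝ)
    (hadapted : ∀ t ≤ T, StronglyMeasurable[ℱ t] (P t))
    (hint : ∀ t ≤ T, Integrable (P t) μ)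
    (hsuper : ∀ t, 1 ≤ t → t ≤ T → (μ[P t | ℱ (t - 1)]) ≤ᵐ[μ] P (t - 1))
    (hbdd : ∀ t ≤ T, ∀ᵐ ω ∂μ, 0 ≤ P t ω ∧ P t ω ≤ 1)
    (hinit : ∀ᵐ ω ∂μ, P 0 ω = 1/2) :
    ∑ t ∈ Finset.Icc 1 T, ∫ ω, (P t ω - (μ[P t | ℱ (t - 1)]) ω) ^ 2 ∂μ ≤ 5/4 := by
  classical
  set Q : ℕ → Ω → ℝ := fun t => μ[P t | ℱ (t - 1)] with hQdef
  set F : ℕ → ℝ := fun t => (∫ ω, P t ω * P t ω ∂μ) - 2 * ∫ ω, P t ω ∂μ with hFdef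
  -- generic integrability of products of [0,1]-bounded functions
  have hmul : ∀ (f g : Ω → ℝ), AEStronglyMeasurable f μ → AEStronglyMeasurable g μ →
      (∀ᵐ ω ∂μ, 0 ≤ f ω ∧ f ω ≤ 1) → (∀ᵐ ω ∂μ, 0 ≤ g ω ∧ g ω ≤ 1) →
      Integrable (fun ω => f ω * g ω) μ := by
    intro f g hf hg hbf hbg
    refine Integrable.mono' (integrable_const 1) (hf.mul hg) ?_
    filter_upwards [hbf, hbg] with ω h1 h2
    rw [Real.norm_eq_abs, abs_mul, abs_of_nonneg h1.1, abs_of_nonneg h2.1]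
    nlinarith [h1.1, h1.2, h2.1, h2.2]
  have key : ∀ t, 1 ≤ t → t ≤ T →
      ∫ ω, (P t ω - Q t ω) ^ 2 ∂μ ≤ F t - F (t - 1) := by
    intro t ht1 htT
    have hm' : ℱ (t - 1) ≤ m := ℱ.le _
    haveI : SigmaFinite (μ.trim hm') := by infer_instance
    have ht1T : t - 1 ≤ T := le_trans (Nat.sub_le t 1) htT
    have hPt : Integrable (P t) μ := hint t htT
    have hPs : Integrable (P (t - 1)) μ := hint _ ht1T
    have hbt := hbdd t htT
    have hbs := hbdd (t - 1) ht1T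
    have hmeasPt : AEStronglyMeasurable (P t) μ :=
      ((hadapted t htT).mono (ℱ.le t)).aestronglyMeasurable
    have hmeasPs : AEStronglyMeasurable (P (t - 1)) μ :=
      ((hadapted _ ht1T).mono (ℱ.le _)).aestronglyMeasurable
    have hQsm : StronglyMeasurable[ℱ (t - 1)] (Q t) := stronglyMeasurable_condExp
    have hQmeas : AEStronglyMeasurable (Q t) μ := (hQsm.mono hm').aestronglyMeasurable
    have hQ0 : 0 ≤ᵐ[μ] Q t := condExp_nonneg (hbt.mono fun ω h => h.1)
    have hQ1 : Q t ≤ᵐ[μ] fun _ => (1 : ℝ) := by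
      have h := condExp_mono (m := ℱ (t - 1)) hPt (integrable_const (1 : ℝ))
        (hbt.mono fun ω h => h.2)
      rwa [condExp_const hm' (1 : ℝ)] at h
    have hbQ : ∀ᵐ ω ∂μ, 0 ≤ Q t ω ∧ Q t ω ≤ 1 := by
      filter_upwards [hQ0, hQ1] with ω h0 h1 using ⟨h0, h1⟩
    have hQle : Q t ≤ᵐ[μ] P (t - 1) := hsuper t ht1 htT
    have hPP : Integrable (fun ω => P t ω * P t ω) μ := hmul _ _ hmeasPt hmeasPt hbt hbt
    have hSS : Integrable (fun ω => P (t - 1) ω * P (t - 1) ω) μ :=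
      hmul _ _ hmeasPs hmeasPs hbs hbs
    have hPQ : Integrable (fun ω => P t ω * Q t ω) μ := hmul _ _ hmeasPt hQmeas hbt hbQ
    have hQQ : Integrable (fun ω => Q t ω * Q t ω) μ := hmul _ _ hQmeas hQmeas hbQ hbQ
    have hQP : Integrable (Q t * P t) μ := hmul _ _ hQmeas hmeasPt hbQ hbt
    have hQint : Integrable (Q t) μ := integrable_condExp
    -- pull-out property
    have hpull : ∫ ω, P t ω * Q t ω ∂μ = ∫ ω, Q t ω * Q t ω ∂μ := by
      have h2 : μ[Q t * P t | ℱ (t - 1)] =ᵐ[μ] Q t * μ[P t | ℱ (t - 1)] :=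
        condExp_mul_of_stronglyMeasurable_left hQsm hQP hPt
      calc ∫ ω, P t ω * Q t ω ∂μ = ∫ ω, (Q t * P t) ω ∂μ := by
            simp only [Pi.mul_apply, mul_comm]
        _ = ∫ ω, (μ[Q t * P t | ℱ (t - 1)]) ω ∂μ := (integral_condExp hm').symm
        _ = ∫ ω, Q t ω * Q t ω ∂μ := by
            refine integral_congr_ae (h2.mono fun ω hω => ?_)
            simpa using hω
    -- expansion of the square
    have hexp : ∫ ω, (P t ω - Q t ω) ^ 2 ∂μ
        = (∫ ω, P t ω * P t ω ∂μ) - ∫ ω, Q t ω * Q t ω ∂μ := by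
      have hident : ∀ ω, (P t ω - Q t ω) ^ 2
          = P t ω * P t ω - 2 * (P t ω * Q t ω) + Q t ω * Q t ω := fun ω => by ring
      simp_rw [hident]
      have h1 : Integrable (fun ω => P t ω * P t ω - 2 * (P t ω * Q t ω)) μ :=
        hPP.sub (hPQ.const_mul 2)
      have h2 : Integrable (fun ω => 2 * (P t ω * Q t ω)) μ := hPQ.const_mul 2
      rw [integral_add h1 hQQ, integral_sub hPP h2, integral_const_mul, hpull]
      ring
    -- comparison of ∫ Q² with ∫ P_{t-1}²
    have hIQ : ∫ ω, Q t ω ∂μ = ∫ ω, P t ω ∂μ := integral_condExp hm'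
    have hcmp : (∫ ω, P (t - 1) ω * P (t - 1) ω ∂μ) - ∫ ω, Q t ω * Q t ω ∂μ
        ≤ 2 * ((∫ ω, P (t - 1) ω ∂μ) - ∫ ω, Q t ω ∂μ) := by
      rw [← integral_sub hSS hQQ, ← integral_sub hPs hQint, ← integral_const_mul]
      have h1 : Integrable (fun ω => P (t - 1) ω * P (t - 1) ω - Q t ω * Q t ω) μ :=
        hSS.sub hQQ
      have h2 : Integrable (fun ω => 2 * (P (t - 1) ω - Q t ω)) μ := (hPs.sub hQint).const_mul 2
      refine integral_mono_ae h1 h2 ?_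
      filter_upwards [hbs, hbQ, hQle] with ω hs hq hle
      nlinarith [hs.1, hs.2, hq.1, hq.2, hle]
    rw [hexp, hFdef]
    simp only
    linarith [hcmp, hIQ]
  -- sum the telescoping bound
  have hsum : ∑ t ∈ Finset.Icc 1 T, ∫ ω, (P t ω - Q t ω) ^ 2 ∂μ
      ≤ ∑ t ∈ Finset.Icc 1 T, (F t - F (t - 1)) := by
    refine Finset.sum_le_sum fun t ht => ?_
    rw [Finset.mem_Icc] at ht
    exact key t ht.1 ht.2
  have htel : ∑ t ∈ Finset.Icc 1 T, (F t - F (t - 1)) = F T - F 0 := by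
    have h1 : Finset.Icc 1 T = Finset.Ico 1 (T + 1) := by
      rw [Finset.Ico_add_one_right_eq_Icc]
    rw [h1, Finset.sum_Ico_eq_sum_range]
    simp only [Nat.add_sub_cancel]
    have : ∀ k, F (1 + k) - F (1 + k - 1) = F (k + 1) - F k := by
      intro k; congr 1 <;> congr 1 <;> omega
    simp_rw [this]
    exact Finset.sum_range_sub F T
  -- compute F 0
  have hI0 : ∫ ω, P 0 ω ∂μ = 1 / 2 := by
    rw [integral_congr_ae (hinit.mono fun ω h => h)]
    simp
  have hI0sq : ∫ ω, P 0 ω * P 0 ω ∂μ = 1 / 4 := by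
    have : (fun ω => P 0 ω * P 0 ω) =ᵐ[μ] fun _ => (1 / 4 : ℝ) := by
      filter_upwards [hinit] with ω h
      rw [h]; norm_num
    rw [integral_congr_ae this]
    simp
  have hF0 : F 0 = -(3 / 4) := by
    rw [hFdef]; simp only; rw [hI0, hI0sq]; norm_num
  -- bound F T
  have hbT := hbdd T le_rfl
  have hmeasPT : AEStronglyMeasurable (P T) μ :=
    ((hadapted T le_rfl).mono (ℱ.le T)).aestronglyMeasurable
  have hPT : Integrable (P T) μ := hint T le_rfl
  have hPTsq : Integrable (fun ω => P T ω * P T ω) μ := hmul _ _ hmeasPT hmeasPT hbT hbT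
  have hsqle : ∫ ω, P T ω * P T ω ∂μ ≤ ∫ ω, P T ω ∂μ := by
    refine integral_mono_ae hPTsq hPT ?_
    filter_upwards [hbT] with ω h
    nlinarith [h.1, h.2]
  have hTnn : 0 ≤ ∫ ω, P T ω ∂μ :=
    integral_nonneg_of_ae (hbT.mono fun ω h => h.1)
  have hFT : F T ≤ 0 := by
    rw [hFdef]; simp only; linarith
  calc ∑ t ∈ Finset.Icc 1 T, ∫ ω, (P t ω - Q t ω) ^ 2 ∂μ
      ≤ F T - F 0 := hsum.trans (le_of_eq htel)
    _ ≤ 5 / 4 := by rw [hF0]; linarith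
end

section
/- Let p and q be probability mass functions on a countable set X. Then ∑_x p(x)·q(x)/(p(x) + q(x)) ≤ 1/2 − (1/4)·TV(p, q)², where the sum ranges over all x with p(x) + q(x) > 0. -/
/-- For probability mass functions `p`, `q` on a countable set `X`,
`∑_x p(x)·q(x)/(p(x)+q(x)) ≤ 1/2 − (1/4)·TV(p,q)²`
(terms with `p x + q x = 0` contribute `0`). -/
theorem sum_harmonic_like_le_half_sub_tv_sq {X : Type*} [Countable X]
    (p q : X → ℝ)
    (hp : ∀ x, 0 ≤ p x) (hq : ∀ x, 0 ≤ q x)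
    (hps : HasSum p 1) (hqs : HasSum q 1) :
    ∑' x, p x * q x / (p x + q x)
      ≤ 1/2 - (1/4) * ((1/2) * ∑' x, |p x - q x|) ^ 2 := by
  set T := ∑' x, |p x - q x| with hTdef
  have hsum_pq : Summable (fun x => p x + q x) := hps.summable.add hqs.summable
  have habs_le : ∀ x, |p x - q x| ≤ p x + q x := fun x => by
    rw [abs_le]; constructor <;> nlinarith [hp x, hq x]
  have hsum_abs : Summable (fun x => |p x - q x|) :=
    Summable.of_nonneg_of_le (fun x => abs_nonneg _) habs_le hsum_pq
  have hT0 : 0 ≤ T := tsum_nonneg fun x => abs_nonneg _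
  have hf_nonneg : ∀ x, 0 ≤ p x * q x / (p x + q x) := fun x =>
    div_nonneg (mul_nonneg (hp x) (hq x)) (by linarith [hp x, hq x])
  have hf_le : ∀ x, p x * q x / (p x + q x) ≤ p x + q x := fun x => by
    rcases eq_or_lt_of_le (by linarith [hp x, hq x] : (0:ℝ) ≤ p x + q x) with h | h
    · rw [← h]; simp
    · rw [div_le_iff₀ h]; nlinarith [hp x, hq x]
  have hsum_f : Summable (fun x => p x * q x / (p x + q x)) :=
    Summable.of_nonneg_of_le hf_nonneg hf_le hsum_pq
  have key : ∀ x, p x * q x / (p x + q x) ≤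
      (1/4 + T^2/16) * (p x + q x) - (T/4) * |p x - q x| := by
    intro x
    rcases eq_or_lt_of_le (by linarith [hp x, hq x] : (0:ℝ) ≤ p x + q x) with h | h
    · have hp0 : p x = 0 := by nlinarith [hp x, hq x]
      have hq0 : q x = 0 := by nlinarith [hp x, hq x]
      simp [hp0, hq0]
    · rw [div_le_iff₀ h]
      nlinarith [sq_nonneg (|p x - q x| - T * (p x + q x) / 2),
        sq_abs (p x - q x), abs_nonneg (p x - q x), hp x, hq x, hT0]
  have hg_sum : Summable (fun x =>
      (1/4 + T^2/16) * (p x + q x) - (T/4) * |p x - q x|) :=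
    (hsum_pq.mul_left _).sub (hsum_abs.mul_left _)
  have h1 : ∑' x, p x * q x / (p x + q x)
      ≤ ∑' x, ((1/4 + T^2/16) * (p x + q x) - (T/4) * |p x - q x|) :=
    Summable.tsum_le_tsum key hsum_f hg_sum
  have h2 : ∑' x, ((1/4 + T^2/16) * (p x + q x) - (T/4) * |p x - q x|)
      = (1/4 + T^2/16) * 2 - (T/4) * T := by
    rw [Summable.tsum_sub (hsum_pq.mul_left _) (hsum_abs.mul_left _),
      tsum_mul_left, tsum_mul_left, ← hTdef]
    have : ∑' x, (p x + q x) = 2 := by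
      have := (hps.add hqs).tsum_eq
      norm_num at this
      simpa using this
    rw [this]
  rw [h2] at h1
  nlinarith [sq_nonneg T]
end

section
/- Let f0 and f1 be probability mass functions on a countable set X and let p ∈ [0, 1]. Then ∑_x f1(x) · (2·p·f1(x)) / ((1+p)·f1(x) + (1−p)·f0(x)) ≥ p, where terms with zero denominator are interpreted as 0. -/
/-- For probability mass functions `f0`, `f1` on a countable set `X` and `p ∈ [0,1]`,
`∑_x f1(x) · (2·p·f1(x)) / ((1+p)·f1(x) + (1−p)·f0(x)) ≥ p`
(terms with zero denominator are `0`, as division by zero is `0` in Lean). -/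
theorem sum_posterior_under_f1_ge {X : Type*} [Countable X]
    (f0 f1 : X → ℝ)
    (h0 : ∀ x, 0 ≤ f0 x) (h1 : ∀ x, 0 ≤ f1 x)
    (h0s : HasSum f0 1) (h1s : HasSum f1 1)
    (p : ℝ) (hp0 : 0 ≤ p) (hp1 : p ≤ 1) :
    ∑' x, f1 x * (2 * p * f1 x) / ((1 + p) * f1 x + (1 - p) * f0 x) ≥ p := by
  have hDnn : ∀ x, (0:ℝ) ≤ (1 + p) * f1 x + (1 - p) * f0 x := fun x => by
    have := mul_nonneg (by linarith : (0:ℝ) ≤ 1 - p) (h0 x)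
    nlinarith [h1 x, mul_nonneg hp0 (h1 x)]
  -- sum of g is exactly p
  have hgs : HasSum (fun x => 2 * p * f1 x
      - (p / 2) * ((1 + p) * f1 x + (1 - p) * f0 x)) p := by
    have h1' : HasSum (fun x => 2 * p * f1 x) (2 * p) := by
      simpa using h1s.mul_left (2 * p)
    have hDs : HasSum (fun x => (1 + p) * f1 x + (1 - p) * f0 x)
        ((1 + p) * 1 + (1 - p) * 1) := (h1s.mul_left _).add (h0s.mul_left _)
    have hD' := hDs.mul_left (p / 2)
    have := h1'.sub hD'
    have hval : 2 * p - p / 2 * ((1 + p) * 1 + (1 - p) * 1) = p := by ring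
    rw [hval] at this
    exact this
  have hle : ∀ x, 2 * p * f1 x - (p / 2) * ((1 + p) * f1 x + (1 - p) * f0 x)
      ≤ f1 x * (2 * p * f1 x) / ((1 + p) * f1 x + (1 - p) * f0 x) := by
    intro x
    rcases eq_or_lt_of_le (hDnn x) with hDz | hDp
    · have hDz := hDz.symm
      have hA : (0:ℝ) ≤ (1 - p) * f0 x := mul_nonneg (by linarith) (h0 x)
      have hB : (0:ℝ) ≤ (1 + p) * f1 x := mul_nonneg (by linarith) (h1 x)
      have hf1 : f1 x = 0 := by
        have hle0 : f1 x ≤ 0 := by nlinarith [h1 x]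
        exact le_antisymm hle0 (h1 x)
      rw [hDz, hf1]
      simp
    · rw [le_div_iff₀ hDp]
      nlinarith [sq_nonneg (f1 x - ((1 + p) * f1 x + (1 - p) * f0 x) / 2), hp0]
  have hFnn : ∀ x, (0:ℝ) ≤ f1 x * (2 * p * f1 x) / ((1 + p) * f1 x + (1 - p) * f0 x) :=
    fun x => div_nonneg (mul_nonneg (h1 x) (mul_nonneg (by positivity) (h1 x))) (hDnn x)
  have hFle : ∀ x, f1 x * (2 * p * f1 x) / ((1 + p) * f1 x + (1 - p) * f0 x)
      ≤ 2 * f1 x := by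
    intro x
    rcases eq_or_lt_of_le (hDnn x) with hDz | hDp
    · rw [← hDz]
      simpa using mul_nonneg (by norm_num : (0:ℝ) ≤ 2) (h1 x)
    · rw [div_le_iff₀ hDp]
      nlinarith [h1 x, h0 x, hp0, hp1, mul_nonneg (h1 x) (h0 x),
        mul_nonneg hp0 (mul_nonneg (h1 x) (h0 x)), sq_nonneg (f1 x),
        mul_nonneg hp0 (mul_nonneg (h1 x) (h1 x))]
  have hFs : Summable (fun x => f1 x * (2 * p * f1 x) / ((1 + p) * f1 x + (1 - p) * f0 x)) :=
    Summable.of_nonneg_of_le hFnn hFle (h1s.summable.mul_left 2)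
  calc p = ∑' x, (2 * p * f1 x - (p / 2) * ((1 + p) * f1 x + (1 - p) * f0 x)) :=
      hgs.tsum_eq.symm
    _ ≤ ∑' x, f1 x * (2 * p * f1 x) / ((1 + p) * f1 x + (1 - p) * f0 x) :=
      Summable.tsum_le_tsum hle hgs.summable hFs
end

section
/- Let f0 and f1 be probability mass functions on a countable set X and let p ∈ [0, 1]. Then ∑_x ((f0(x) + f1(x))/2) · (2·p·f1(x)) / ((1+p)·f1(x) + (1−p)·f0(x)) ≤ p, where terms with zero denominator are interpreted as 0. -/
/-- For probability mass functions `f0`, `f1` on a countable set `X` and `p ∈ [0,1]`,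
`∑_x ((f0(x)+f1(x))/2) · (2·p·f1(x)) / ((1+p)·f1(x) + (1−p)·f0(x)) ≤ p`
(terms with zero denominator are `0`, as division by zero is `0` in Lean). -/
theorem sum_posterior_under_mixture_le {X : Type*} [Countable X]
    (f0 f1 : X → ℝ)
    (h0 : ∀ x, 0 ≤ f0 x) (h1 : ∀ x, 0 ≤ f1 x)
    (h0s : HasSum f0 1) (h1s : HasSum f1 1)
    (p : ℝ) (hp0 : 0 ≤ p) (hp1 : p ≤ 1) :
    ∑' x, ((f0 x + f1 x) / 2) * (2 * p * f1 x) / ((1 + p) * f1 x + (1 - p) * f0 x) ≤ p := by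
  set T : X → ℝ := fun x =>
    ((f0 x + f1 x) / 2) * (2 * p * f1 x) / ((1 + p) * f1 x + (1 - p) * f0 x) with hT
  set G : X → ℝ := fun x => p * p / 2 * (f0 x + f1 x) + p * (1 - p) * f1 x with hG
  have hTnn : ∀ x, 0 ≤ T x := by
    intro x
    exact div_nonneg (mul_nonneg (by linarith [h0 x, h1 x])
      (mul_nonneg (by linarith) (h1 x))) (by nlinarith [h0 x, h1 x])
  have key : ∀ x, T x ≤ G x := by
    intro x
    have hcnn : 0 ≤ f0 x := h0 x
    have hann : 0 ≤ f1 x := h1 x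
    simp only [hT, hG]
    set c := f0 x with hc
    set a := f1 x with ha
    have hDnn : 0 ≤ (1 + p) * a + (1 - p) * c := by nlinarith
    rcases eq_or_lt_of_le hDnn with hD0 | hDpos
    · rw [← hD0, div_zero]
      nlinarith
    · rw [div_le_iff₀ hDpos]
      nlinarith [sq_nonneg (a - c), mul_nonneg (mul_nonneg hp0 (sub_nonneg.2 hp1)) (sq_nonneg (a - c))]
  have hGs : HasSum G (p * p / 2 * (1 + 1) + p * (1 - p) * 1) :=
    ((h0s.add h1s).mul_left _).add (h1s.mul_left _)
  calc ∑' x, T x ≤ ∑' x, G x :=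
        Summable.tsum_le_tsum key (hGs.summable.of_nonneg_of_le hTnn key) hGs.summable
    _ = p := by rw [hGs.tsum_eq]; ring
end
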